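/- arXiv:1404.2655 — 3 statements merged into one kernel-verified Lean document; each statement's English description precedes it below -/
import Mathlib

section
/- Let X ∈ ℝ^{dn×dn} be positive semidefinite with all diagonal d×d blocks X_{ii} = I_{d×d} and rank(X) ≤ d. Then there exist orthogonal matrices O_1,…,O_n ∈ O(d) such that X_{ij} = O_i O_jᵀ for all i,j. -/
open Matrix BigOperators

noncomputable def frobSq {α β : Type*} [Fintype α] [Fintype β] (A : Matrix α β ℝ) : ℝ :=
  ∑ i, ∑ j, (A i j) ^ 2

noncomputable def frobNorm {α β : Type*} [Fintype α] [Fintype β] (A : Matrix α β ℝ) : ℝ :=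
  Real.sqrt (frobSq A)

/-- The (i,j) d×d block of an (nd)×(nd) matrix. -/
def blk {n d : ℕ} (X : Matrix (Fin n × Fin d) (Fin n × Fin d) ℝ) (i j : Fin n) :
    Matrix (Fin d) (Fin d) ℝ :=
  fun a b => X (i, a) (j, b)

theorem stmt5 {d n : ℕ} (X : Matrix (Fin n × Fin d) (Fin n × Fin d) ℝ)
    (hpsd : X.PosSemidef) (hdiag : ∀ i, blk X i i = 1) (hrank : X.rank ≤ d) :
    ∃ O : Fin n → Matrix (Fin d) (Fin d) ℝ,
      (∀ i, O i * (O i)ᵀ = 1) ∧ ∀ i j, blk X i j = O i * (O j)ᵀ := by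
  classical
  have hH := hpsd.isHermitian
  set U : Matrix (Fin n × Fin d) (Fin n × Fin d) ℝ :=
    (↑hH.eigenvectorUnitary : Matrix (Fin n × Fin d) (Fin n × Fin d) ℝ) with hU
  set μ := hH.eigenvalues with hμdef
  have hμ : ∀ k, 0 ≤ μ k := fun k => hpsd.eigenvalues_nonneg k
  have hcard : Fintype.card {k // μ k ≠ 0} ≤ d := by
    have h := hH.rank_eq_card_non_zero_eigs
    rw [← hμdef] at h
    omega
  obtain ⟨e⟩ : Nonempty ({k // μ k ≠ 0} ↪ Fin d) := by
    apply Function.Embedding.nonempty_of_card_le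
    simpa using hcard
  set Y : Matrix (Fin n × Fin d) (Fin d) ℝ := fun p c =>
    if h : ∃ k : {k // μ k ≠ 0}, e k = c then
      U p h.choose * Real.sqrt (μ h.choose) else 0 with hY
  have hYe : ∀ (p) (k : {k // μ k ≠ 0}), Y p (e k) = U p k * Real.sqrt (μ k) := by
    intro p k
    have h : ∃ k' : {k // μ k ≠ 0}, e k' = e k := ⟨k, rfl⟩
    have hk : h.choose = k := e.injective h.choose_spec
    show (if h : ∃ k' : {k // μ k ≠ 0}, e k' = e k then
      U p h.choose * Real.sqrt (μ h.choose) else 0) = _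
    rw [dif_pos h, hk]
  have hY0 : ∀ (p) (c), (¬ ∃ k : {k // μ k ≠ 0}, e k = c) → Y p c = 0 := by
    intro p c h
    show (if h : ∃ k : {k // μ k ≠ 0}, e k = c then
      U p h.choose * Real.sqrt (μ h.choose) else 0) = 0
    rw [dif_neg h]
  have key : ∀ p q, X p q = ∑ c, Y p c * Y q c := by
    intro p q
    have hspec := hH.spectral_theorem
    have hXpq : X p q = ∑ k, U p k * μ k * U q k := by
      conv_lhs => rw [hspec, Unitary.conjStarAlgAut_apply]
      rw [Matrix.mul_apply]
      apply Finset.sum_congr rfl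
      intro k _
      rw [Matrix.mul_diagonal]
      simp only [Matrix.star_apply, star_trivial, Function.comp_apply]
      norm_num
      simp only [hU, Matrix.IsHermitian.eigenvectorUnitary_apply, hμdef]
    have h1 : ∑ c, Y p c * Y q c = ∑ k : {k // μ k ≠ 0}, Y p (e k) * Y q (e k) := by
      rw [← Finset.sum_image (s := Finset.univ) (g := ⇑e)
        (f := fun c => Y p c * Y q c) (fun a _ b _ h => e.injective h)]
      symm
      apply Finset.sum_subset (Finset.subset_univ _)
      intro c _ hc
      have hne : ¬ ∃ k : {k // μ k ≠ 0}, e k = c := by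
        rintro ⟨k, hk⟩
        exact hc (Finset.mem_image.2 ⟨k, Finset.mem_univ _, hk⟩)
      rw [hY0 p c hne, zero_mul]
    have h2 : ∑ k : {k // μ k ≠ 0}, Y p (e k) * Y q (e k)
        = ∑ k : {k // μ k ≠ 0}, U p k * μ k * U q k := by
      apply Finset.sum_congr rfl
      intro k _
      rw [hYe, hYe,
        show U p k.1 * Real.sqrt (μ k.1) * (U q k.1 * Real.sqrt (μ k.1))
          = U p k.1 * (Real.sqrt (μ k.1) * Real.sqrt (μ k.1)) * U q k.1 by ring,
        Real.mul_self_sqrt (hμ k.1)]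
    have h3 : ∑ k : {k // μ k ≠ 0}, U p k * μ k * U q k = ∑ k, U p k * μ k * U q k := by
      rw [← Finset.sum_subtype (Finset.univ.filter (fun k => μ k ≠ 0)) (by simp)
        (fun k => U p k * μ k * U q k)]
      apply Finset.sum_filter_of_ne
      intro k _ h hk
      apply h
      rw [hk]
      ring
    rw [hXpq, ← h3, ← h2, ← h1]
  clear_value Y U μ
  have hO : ∀ i j, blk X i j =
      (Matrix.of fun a c => Y (i, a) c) * (Matrix.of fun a c => Y (j, a) c)ᵀ := by
    intro i j
    ext a b
    rw [Matrix.mul_apply]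
    show X (i, a) (j, b) = ∑ c, Y (i, a) c * Y (j, b) c
    exact key (i, a) (j, b)
  exact ⟨fun i => Matrix.of fun a c => Y (i, a) c,
    fun i => (hO i i).symm.trans (hdiag i), hO⟩
end

section
/- Suppose the matrix C ∈ ℝ^{dn×dn} has blocks C_{ij} = A_i A_jᵀ where A_i = O_i A for a fixed A ∈ ℝ^{d×m} with rank(A) = d and fixed O_1,…,O_n ∈ O(d) (the noiseless case σ = 0). Then X* with blocks X*_{ij} = O_i O_jᵀ is an optimal solution of the SDP max{Tr(CX) : X ⪰ 0, X_{ii} = I}, and its objective value is n² Tr(AAᵀ). -/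
open Matrix BigOperators

private lemma aux_trace {N d m : Type*} [Fintype N] [Fintype d] [Fintype m]
    (P Q : Matrix d m ℝ) (R S : Matrix N d ℝ) :
    (P * Qᵀ * (Sᵀ * R)).trace = ((R * P)ᵀ * (S * Q)).trace := by
  rw [← Matrix.trace_transpose ((R * P)ᵀ * (S * Q)), Matrix.transpose_mul,
    Matrix.transpose_transpose, Matrix.transpose_mul]
  rw [Matrix.trace_mul_comm (P * Qᵀ) (Sᵀ * R), Matrix.trace_mul_comm (Qᵀ * Sᵀ) (R * P)]
  simp only [Matrix.mul_assoc]
  rw [Matrix.trace_mul_comm Sᵀ (R * (P * Qᵀ))]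
  simp only [Matrix.mul_assoc]

theorem stmt10 {d m n : ℕ}
    (A : Matrix (Fin d) (Fin m) ℝ) (hA : A.rank = d)
    (O : Fin n → Matrix (Fin d) (Fin d) ℝ) (hO : ∀ i, O i * (O i)ᵀ = 1)
    (C : Matrix (Fin n × Fin d) (Fin n × Fin d) ℝ)
    (hC : ∀ i j, blk C i j = (O i * A) * (O j * A)ᵀ)
    (Xstar : Matrix (Fin n × Fin d) (Fin n × Fin d) ℝ)
    (hXstar : ∀ i j, blk Xstar i j = O i * (O j)ᵀ) :
    Xstar.PosSemidef ∧ (∀ i, blk Xstar i i = 1) ∧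
    (∀ X : Matrix (Fin n × Fin d) (Fin n × Fin d) ℝ,
      X.PosSemidef → (∀ i, blk X i i = 1) → (C * X).trace ≤ (C * Xstar).trace) ∧
    (C * Xstar).trace = (n : ℝ) ^ 2 * (A * Aᵀ).trace := by
  classical
  have hOt : ∀ i, (O i)ᵀ * O i = 1 := fun i => mul_eq_one_comm.mp (hO i)
  -- block trace formula
  have key : ∀ M : Matrix (Fin n × Fin d) (Fin n × Fin d) ℝ,
      (C * M).trace = ∑ i, ∑ j, ((blk C i j) * (blk M j i)).trace := by
    intro M
    simp only [Matrix.trace, Matrix.diag, Matrix.mul_apply, blk, Fintype.sum_prod_type]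
    exact Finset.sum_congr rfl (fun i _ => Finset.sum_comm)
  -- value at Xstar
  have hstar : ∀ i j : Fin n, ((blk C i j) * (blk Xstar j i)).trace = (A * Aᵀ).trace := by
    intro i j
    have hSR : blk Xstar j i = ((O j)ᵀ)ᵀ * (O i)ᵀ := by
      rw [hXstar, Matrix.transpose_transpose]
    rw [hC, hSR, aux_trace (O i * A) (O j * A) ((O i)ᵀ) ((O j)ᵀ)]
    rw [← Matrix.mul_assoc ((O i)ᵀ) (O i) A, hOt, Matrix.one_mul,
      ← Matrix.mul_assoc ((O j)ᵀ) (O j) A, hOt, Matrix.one_mul]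
    exact Matrix.trace_mul_comm _ _
  have hval : (C * Xstar).trace = (n : ℝ) ^ 2 * (A * Aᵀ).trace := by
    rw [key]
    simp only [hstar, Finset.sum_const, Finset.card_univ, Fintype.card_fin, nsmul_eq_mul]
    ring
  -- PSD of Xstar
  have hpsd : Xstar.PosSemidef := by
    have hfac : Xstar =
        (Matrix.of (fun p c => O p.1 p.2 c) : Matrix (Fin n × Fin d) (Fin d) ℝ) *
        (Matrix.of (fun p c => O p.1 p.2 c) : Matrix (Fin n × Fin d) (Fin d) ℝ)ᴴ := by
      ext ⟨i, a⟩ ⟨j, b⟩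
      have h2 := congrFun (congrFun (hXstar i j) a) b
      simpa [blk, Matrix.mul_apply, Matrix.conjTranspose_apply] using h2
    rw [hfac]
    exact Matrix.posSemidef_self_mul_conjTranspose _
  have hdiag : ∀ i, blk Xstar i i = 1 := by
    intro i; rw [hXstar]; exact hO i
  refine ⟨hpsd, hdiag, ?_, hval⟩
  -- the inequality
  intro X hX hXd
  obtain ⟨B, hB⟩ : ∃ B : Matrix (Fin n × Fin d) (Fin n × Fin d) ℝ, X = Bᵀ * B := by
    open scoped MatrixOrder in
    obtain ⟨B, hB, -, hXB⟩ :=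
          sub_zero X ▸ CFC.exists_sqrt_of_isSelfAdjoint_of_quasispectrumRestricts hX.isHermitian
            (QuasispectrumRestricts.nnreal_of_nonneg (Matrix.nonneg_iff_posSemidef.mpr hX))
    rw [sub_zero] at hXB
    have h2 : Bᴴ = B := hB
    rw [Matrix.conjTranspose_eq_transpose_of_trivial] at h2
    exact ⟨B, by rw [h2, hXB]⟩
  set Y : Fin n → Matrix (Fin n × Fin d) (Fin d) ℝ :=
    fun i => Matrix.of (fun p a => B p (i, a)) with hYdef
  have hY : ∀ i j, (Y i)ᵀ * Y j = blk X i j := by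
    intro i j
    ext a b
    simp [hYdef, hB, blk, Matrix.mul_apply]
  set Z : Fin n → Matrix (Fin n × Fin d) (Fin m) ℝ :=
    fun i => Y i * (O i * A) with hZdef
  have key2 : ∀ i j, ((blk C i j) * (blk X j i)).trace = ((Z i)ᵀ * Z j).trace := by
    intro i j
    rw [hC, ← hY j i]
    exact aux_trace (O i * A) (O j * A) (Y i) (Y j)
  -- diagonal norms
  have hZdiag : ∀ i, ((Z i)ᵀ * Z i).trace = (A * Aᵀ).trace := by
    intro i
    rw [← aux_trace (O i * A) (O i * A) (Y i) (Y i), hY i i, hXd i, Matrix.mul_one,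
      Matrix.transpose_mul, Matrix.trace_mul_comm, Matrix.mul_assoc,
      ← Matrix.mul_assoc ((O i)ᵀ), hOt, Matrix.one_mul, Matrix.trace_mul_comm]
  have hT0 : 0 ≤ (A * Aᵀ).trace := by
    have h : (A * Aᵀ).trace = ∑ i, ∑ j, (A i j) ^ 2 := by
      simp [Matrix.trace, Matrix.mul_apply, sq]
    rw [h]; positivity
  have htr : ∀ i j, ((Z i)ᵀ * Z j).trace =
      ∑ pc : Fin m × (Fin n × Fin d), Z i pc.2 pc.1 * Z j pc.2 pc.1 := by
    intro i j
    simp [Matrix.trace, Matrix.diag, Matrix.mul_apply, Fintype.sum_prod_type]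
  have hCS : ∀ i j, ((Z i)ᵀ * Z j).trace ≤ (A * Aᵀ).trace := by
    intro i j
    have h2 := Finset.sum_mul_sq_le_sq_mul_sq Finset.univ
      (fun pc : Fin m × (Fin n × Fin d) => Z i pc.2 pc.1)
      (fun pc : Fin m × (Fin n × Fin d) => Z j pc.2 pc.1)
    have ei : ∑ pc : Fin m × (Fin n × Fin d), (Z i pc.2 pc.1) ^ 2 = (A * Aᵀ).trace := by
      rw [← hZdiag i, htr i i]; simp [sq]
    have ej : ∑ pc : Fin m × (Fin n × Fin d), (Z j pc.2 pc.1) ^ 2 = (A * Aᵀ).trace := by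
      rw [← hZdiag j, htr j j]; simp [sq]
    rw [ei, ej] at h2
    rw [htr i j]
    nlinarith [h2, hT0]
  rw [key X, hval]
  calc ∑ i, ∑ j, ((blk C i j) * (blk X j i)).trace
      ≤ ∑ i : Fin n, ∑ j : Fin n, (A * Aᵀ).trace := by
        apply Finset.sum_le_sum; intro i _
        apply Finset.sum_le_sum; intro j _
        rw [key2 i j]; exact hCS i j
    _ = (n : ℝ) ^ 2 * (A * Aᵀ).trace := by
        simp [Finset.sum_const, Finset.card_univ, nsmul_eq_mul]; ring
end

section
/- Let C ∈ ℝ^{dn×dn} be symmetric positive semidefinite with C = BBᵀ where B = [B_1; …; B_n], B_i ∈ ℝ^{d×m}. Then for any feasible X of the SDP (X ⪰ 0, X_{ii} = I), Tr(CX) ≤ (∑_{i=1}^n ‖B_i‖_F)². -/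
open Matrix BigOperators

lemma quad_nonneg {ι : Type*} [Fintype ι] (X : Matrix ι ι ℝ) (h : X.PosSemidef)
    (z : ι → ℝ) : 0 ≤ ∑ p, ∑ q, z p * X p q * z q := by
  have := h.dotProduct_mulVec_nonneg z
  simpa [dotProduct, mulVec, Finset.mul_sum, mul_assoc] using this

lemma collapse {n d : ℕ} (i : Fin n) (f : Fin d → ℝ) (w : Fin n × Fin d → ℝ) :
    ∑ p : Fin n × Fin d, (if p.1 = i then f p.2 else 0) * w p = ∑ a, f a * w (i, a) := by
  rw [Fintype.sum_prod_type]
  simp [Finset.sum_ite_eq', ite_mul]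

lemma dsum_scale {d : ℕ} (c e : ℝ) (f g : Fin d → ℝ) (M : Fin d → Fin d → ℝ) :
    ∑ a, c * f a * (∑ b, e * g b * M a b) = (c * e) * ∑ a, ∑ b, f a * M a b * g b := by
  rw [Finset.mul_sum]
  refine Finset.sum_congr rfl fun a _ => ?_
  rw [Finset.mul_sum, Finset.mul_sum]
  exact Finset.sum_congr rfl fun b _ => by ring

lemma block_bound {n d : ℕ} (X : Matrix (Fin n × Fin d) (Fin n × Fin d) ℝ)
    (hpsd : X.PosSemidef) (hdiag : ∀ i, blk X i i = 1) (i j : Fin n) (u v : Fin d → ℝ) :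
    ∑ a, ∑ b, u a * X (i, a) (j, b) * v b
      ≤ Real.sqrt (∑ a, u a ^ 2) * Real.sqrt (∑ b, v b ^ 2) := by
  set nu := Real.sqrt (∑ a, u a ^ 2) with hnu
  set nv := Real.sqrt (∑ b, v b ^ 2) with hnv
  have hnu0 : 0 ≤ nu := Real.sqrt_nonneg _
  have hnv0 : 0 ≤ nv := Real.sqrt_nonneg _
  have hnusq : nu ^ 2 = ∑ a, u a ^ 2 := Real.sq_sqrt (by positivity)
  have hnvsq : nv ^ 2 = ∑ b, v b ^ 2 := Real.sq_sqrt (by positivity)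
  have hX : ∀ i' a b, X (i', a) (i', b) = if a = b then 1 else 0 := by
    intro i' a b
    have := congrFun (congrFun (hdiag i') a) b
    simpa [blk, Matrix.one_apply] using this
  by_cases hij : i = j
  · subst hij
    calc ∑ a, ∑ b, u a * X (i, a) (i, b) * v b
        = ∑ a, u a * v a := by
          simp [hX, mul_ite, ite_mul, Finset.sum_ite_eq']
      _ ≤ nu * nv := Real.sum_mul_le_sqrt_mul_sqrt _ _ _
  · -- off-diagonal case
    set z : Fin n × Fin d → ℝ := fun p =>
      (if p.1 = i then nv * u p.2 else 0) + (if p.1 = j then -nu * v p.2 else 0) with hz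
    have hq := quad_nonneg X hpsd z
    have hsym : ∀ p q, X p q = X q p := by
      intro p q
      have := congrFun (congrFun hpsd.1 q) p
      simpa [Matrix.conjTranspose_apply] using this
    set S := ∑ a, ∑ b, u a * X (i, a) (j, b) * v b with hS
    have hw : ∀ p : Fin n × Fin d, (∑ q, X p q * z q)
        = (∑ b, nv * u b * X p (i, b)) + ∑ b, -nu * v b * X p (j, b) := by
      intro p
      rw [← collapse i (fun b => nv * u b) (fun q => X p q),
          ← collapse j (fun b => -nu * v b) (fun q => X p q),
          ← Finset.sum_add_distrib]
      refine Finset.sum_congr rfl fun q _ => ?_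
      simp only [hz]; ring
    have hQ : (∑ p, ∑ q, z p * X p q * z q)
        = ∑ a, nv * u a * ((∑ b, nv * u b * X (i, a) (i, b)) + ∑ b, -nu * v b * X (i, a) (j, b))
          + ∑ a, -nu * v a * ((∑ b, nv * u b * X (j, a) (i, b)) + ∑ b, -nu * v b * X (j, a) (j, b)) := by
      calc (∑ p, ∑ q, z p * X p q * z q)
          = ∑ p, z p * (∑ q, X p q * z q) := by
            refine Finset.sum_congr rfl fun p _ => ?_
            rw [Finset.mul_sum]
            exact Finset.sum_congr rfl fun q _ => mul_assoc _ _ _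
        _ = ∑ p : Fin n × Fin d, (if p.1 = i then nv * u p.2 else 0) * (∑ q, X p q * z q)
            + ∑ p : Fin n × Fin d, (if p.1 = j then -nu * v p.2 else 0) * (∑ q, X p q * z q) := by
            rw [← Finset.sum_add_distrib]
            refine Finset.sum_congr rfl fun p _ => ?_
            simp only [hz]; ring
        _ = ∑ a, nv * u a * (∑ q, X (i, a) q * z q)
            + ∑ a, -nu * v a * (∑ q, X (j, a) q * z q) := by
            rw [collapse i (fun a => nv * u a) (fun p => ∑ q, X p q * z q),
                collapse j (fun a => -nu * v a) (fun p => ∑ q, X p q * z q)]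
        _ = _ := by
            congr 1 <;> exact Finset.sum_congr rfl fun a _ => by rw [hw]
    -- split the two sums into four pieces
    have split1 : ∑ a, nv * u a * ((∑ b, nv * u b * X (i, a) (i, b)) + ∑ b, -nu * v b * X (i, a) (j, b))
        = (∑ a, nv * u a * (∑ b, nv * u b * X (i, a) (i, b)))
          + ∑ a, nv * u a * (∑ b, -nu * v b * X (i, a) (j, b)) := by
      rw [← Finset.sum_add_distrib]
      exact Finset.sum_congr rfl fun a _ => by ring
    have split2 : ∑ a, -nu * v a * ((∑ b, nv * u b * X (j, a) (i, b)) + ∑ b, -nu * v b * X (j, a) (j, b))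
        = (∑ a, -nu * v a * (∑ b, nv * u b * X (j, a) (i, b)))
          + ∑ a, -nu * v a * (∑ b, -nu * v b * X (j, a) (j, b)) := by
      rw [← Finset.sum_add_distrib]
      exact Finset.sum_congr rfl fun a _ => by ring
    have E11 : ∑ a, nv * u a * (∑ b, nv * u b * X (i, a) (i, b)) = nv ^ 2 * nu ^ 2 := by
      rw [dsum_scale nv nv u u (fun a b => X (i, a) (i, b))]
      have : ∑ a, ∑ b, u a * X (i, a) (i, b) * u b = ∑ a, u a ^ 2 := by
        refine Finset.sum_congr rfl fun a _ => ?_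
        simp [hX, mul_ite, ite_mul, Finset.sum_ite_eq, sq]
      rw [this, ← hnusq]; ring
    have E22 : ∑ a, -nu * v a * (∑ b, -nu * v b * X (j, a) (j, b)) = nu ^ 2 * nv ^ 2 := by
      rw [dsum_scale (-nu) (-nu) v v (fun a b => X (j, a) (j, b))]
      have : ∑ a, ∑ b, v a * X (j, a) (j, b) * v b = ∑ b, v b ^ 2 := by
        refine Finset.sum_congr rfl fun a _ => ?_
        simp [hX, mul_ite, ite_mul, Finset.sum_ite_eq, sq]
      rw [this, ← hnvsq]; ring
    have E12 : ∑ a, nv * u a * (∑ b, -nu * v b * X (i, a) (j, b)) = -(nu * nv * S) := by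
      rw [dsum_scale nv (-nu) u v (fun a b => X (i, a) (j, b)), ← hS]; ring
    have E21 : ∑ a, -nu * v a * (∑ b, nv * u b * X (j, a) (i, b)) = -(nu * nv * S) := by
      rw [dsum_scale (-nu) nv v u (fun a b => X (j, a) (i, b))]
      have : ∑ a, ∑ b, v a * X (j, a) (i, b) * u b = S := by
        rw [hS, Finset.sum_comm]
        refine Finset.sum_congr rfl fun b _ => Finset.sum_congr rfl fun a _ => ?_
        rw [hsym (j, a) (i, b)]; ring
      rw [this]; ring
    rw [hQ, split1, split2, E11, E22, E12, E21] at hq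
    have key2 : nu * nv * S ≤ (nu * nv) * (nu * nv) := by nlinarith
    rcases eq_or_lt_of_le (mul_nonneg hnu0 hnv0) with h0 | hpos
    · have hS0 : S = 0 := by
        rcases mul_eq_zero.mp h0.symm with h | h
        · have hsum : ∑ a, u a ^ 2 = 0 :=
            le_antisymm (Real.sqrt_eq_zero'.mp h) (Finset.sum_nonneg fun _ _ => sq_nonneg _)
          have hu : ∀ a, u a = 0 := fun a =>
            pow_eq_zero_iff (n := 2) (by norm_num) |>.mp
              ((Finset.sum_eq_zero_iff_of_nonneg (fun a _ => sq_nonneg (u a))).mp hsum a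
                (Finset.mem_univ a))
          rw [hS]
          exact Finset.sum_eq_zero fun a _ => Finset.sum_eq_zero fun b _ => by rw [hu a]; ring
        · have hsum : ∑ b, v b ^ 2 = 0 :=
            le_antisymm (Real.sqrt_eq_zero'.mp h) (Finset.sum_nonneg fun _ _ => sq_nonneg _)
          have hv : ∀ b, v b = 0 := fun b =>
            pow_eq_zero_iff (n := 2) (by norm_num) |>.mp
              ((Finset.sum_eq_zero_iff_of_nonneg (fun b _ => sq_nonneg (v b))).mp hsum b
                (Finset.mem_univ b))
          rw [hS]
          exact Finset.sum_eq_zero fun a _ => Finset.sum_eq_zero fun b _ => by rw [hv b]; ring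
      rw [hS0, ← h0]
    · exact le_of_mul_le_mul_left key2 hpos

theorem stmt11 {d m n : ℕ}
    (B : Matrix (Fin n × Fin d) (Fin m) ℝ)
    (C : Matrix (Fin n × Fin d) (Fin n × Fin d) ℝ) (hC : C = B * Bᵀ)
    (X : Matrix (Fin n × Fin d) (Fin n × Fin d) ℝ)
    (hpsd : X.PosSemidef) (hdiag : ∀ i, blk X i i = 1) :
    (C * X).trace ≤ (∑ i : Fin n, frobNorm (fun a b => B (i, a) b)) ^ 2 := by
  subst hC
  have htr : (B * Bᵀ * X).trace
      = ∑ i : Fin n, ∑ j : Fin n, ∑ k, ∑ a, ∑ b, B (i, a) k * X (i, a) (j, b) * B (j, b) k := by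
    rw [Matrix.mul_assoc, Matrix.trace_mul_comm]
    rw [Matrix.trace]
    simp only [Matrix.diag, Matrix.mul_apply, Matrix.transpose_apply, Finset.sum_mul]
    rw [Finset.sum_comm]
    conv_lhs => enter [2, q]; rw [Finset.sum_comm]
    rw [Finset.sum_comm]
    simp only [Fintype.sum_prod_type]
    conv_lhs => enter [2, i]; rw [Finset.sum_comm]
    conv_lhs => enter [2, i, 2, j, 2, a]; rw [Finset.sum_comm]
    conv_lhs => enter [2, i, 2, j]; rw [Finset.sum_comm]
  rw [htr]
  have nb : Fin n → Fin m → ℝ := fun i k => Real.sqrt (∑ a, B (i, a) k ^ 2)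
  calc ∑ i : Fin n, ∑ j : Fin n, ∑ k, ∑ a, ∑ b, B (i, a) k * X (i, a) (j, b) * B (j, b) k
      ≤ ∑ i : Fin n, ∑ j : Fin n, frobNorm (fun a b => B (i, a) b) * frobNorm (fun a b => B (j, a) b) := by
        refine Finset.sum_le_sum fun i _ => Finset.sum_le_sum fun j _ => ?_
        calc ∑ k, ∑ a, ∑ b, B (i, a) k * X (i, a) (j, b) * B (j, b) k
            ≤ ∑ k, Real.sqrt (∑ a, B (i, a) k ^ 2) * Real.sqrt (∑ b, B (j, b) k ^ 2) := by
              refine Finset.sum_le_sum fun k _ => ?_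
              exact block_bound X hpsd hdiag i j (fun a => B (i, a) k) (fun b => B (j, b) k)
          _ ≤ Real.sqrt (∑ k, (Real.sqrt (∑ a, B (i, a) k ^ 2)) ^ 2)
              * Real.sqrt (∑ k, (Real.sqrt (∑ b, B (j, b) k ^ 2)) ^ 2) :=
              Real.sum_mul_le_sqrt_mul_sqrt _ _ _
          _ = frobNorm (fun a b => B (i, a) b) * frobNorm (fun a b => B (j, a) b) := by
              congr 1 <;>
              · unfold frobNorm frobSq
                congr 1
                rw [Finset.sum_comm]
                exact Finset.sum_congr rfl fun k _ => Real.sq_sqrt (by positivity)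
    _ = (∑ i : Fin n, frobNorm (fun a b => B (i, a) b)) ^ 2 := by
        rw [sq, Finset.sum_mul_sum]
end
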